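/- If the interim envy graph of a lottery Q has no cycle of positive total weight, then Q is iEF-able with A-payments: setting p_i equal to the maximum total weight over all directed paths starting at node i in the interim envy graph yields payments making the pair (Q, p) iEF. -/

import Mathlib

open Finset

/-- Value of agent `i` for a bundle `S` of items (additive valuations). -/
def bundleVal {n m : ℕ} (v : Fin n → Fin m → ℝ) (i : Fin n) (S : Finset (Fin m)) : ℝ :=
  ∑ j ∈ S, v i j

/-- Probability that agent `i` receives bundle `S` under lottery `x`. -/
def prBundle {n m : ℕ} (x : (Fin n → Finset (Fin m)) → ℝ) (i : Fin n) (S : Finset (Fin m)) : ℝ :=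
  ∑ a ∈ Finset.univ.filter (fun a => a i = S), x a

/-- Interim envy-freeness: for all `i ≠ k` and every bundle `S` received with positive
probability, `v_i(S) ≥ E[v_i(A_k) | A_i = S]` (stated multiplied through by the
positive probability `Pr[A_i = S]`). -/
def IEF {n m : ℕ} (v : Fin n → Fin m → ℝ) (x : (Fin n → Finset (Fin m)) → ℝ) : Prop :=
  ∀ i k : Fin n, i ≠ k → ∀ S : Finset (Fin m), 0 < prBundle x i S →
    (∑ a ∈ Finset.univ.filter (fun a => a i = S), x a * bundleVal v i (a k))
      ≤ bundleVal v i S * prBundle x i S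

/-- An allocation is a partition of the items into bundles, one per agent. -/
def IsPartition {n m : ℕ} (a : Fin n → Finset (Fin m)) : Prop :=
  (∀ i k : Fin n, i ≠ k → Disjoint (a i) (a k)) ∧ ∀ j : Fin m, ∃ i, j ∈ a i

/-- The conditional expectation `E[v_i(A_k) | A_i = S]`. -/
noncomputable def condVal {n m : ℕ} (v : Fin n → Fin m → ℝ)
    (x : (Fin n → Finset (Fin m)) → ℝ) (i k : Fin n) (S : Finset (Fin m)) : ℝ :=
  (∑ a ∈ Finset.univ.filter (fun a => a i = S), x a * bundleVal v i (a k)) / prBundle x i S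

/-- The edge weight of the interim envy graph:
`w(i,k) = max over bundles S with Pr[A_i = S] > 0 of (E[v_i(A_k) | A_i = S] - v_i(S))`. -/
noncomputable def envyWeight {n m : ℕ} (v : Fin n → Fin m → ℝ)
    (x : (Fin n → Finset (Fin m)) → ℝ) (i k : Fin n) : ℝ :=
  sSup {y : ℝ | ∃ S : Finset (Fin m), 0 < prBundle x i S ∧
    y = condVal v x i k S - bundleVal v i S}

/-- The total weight of a walk (list of nodes) in a weighted digraph. -/
def pathWeight {n : ℕ} (w : Fin n → Fin n → ℝ) : List (Fin n) → ℝ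
  | [] => 0
  | [_] => 0
  | a :: b :: t => w a b + pathWeight w (b :: t)

/-- The pair of a lottery `x` and A-payments `p` is interim envy-free: for all agents
`i ≠ k` and every bundle `S` received by `i` with positive probability,
`v_i(S) + p_i ≥ E[v_i(A_k) | A_i = S] + p_k`. -/
def IEFpay {n m : ℕ} (v : Fin n → Fin m → ℝ)
    (x : (Fin n → Finset (Fin m)) → ℝ) (p : Fin n → ℝ) : Prop :=
  ∀ i k : Fin n, i ≠ k → ∀ S : Finset (Fin m), 0 < prBundle x i S →
    condVal v x i k S + p k ≤ bundleVal v i S + p i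

lemma pathWeight_append {n : ℕ} (w : Fin n → Fin n → ℝ) :
    ∀ (l1 : List (Fin n)) (a : Fin n) (l2 : List (Fin n)),
      pathWeight w (l1 ++ a :: l2) = pathWeight w (l1 ++ [a]) + pathWeight w (a :: l2)
  | [], a, l2 => by simp [pathWeight]
  | [b], a, l2 => by simp [pathWeight]
  | b :: c :: t, a, l2 => by
    have ih := pathWeight_append w (c :: t) a l2
    simp only [List.cons_append, List.append_eq, pathWeight] at ih ⊢
    linarith

lemma bddAbove_pset {n : ℕ} (w : Fin n → Fin n → ℝ) (i : Fin n) :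
    BddAbove {y : ℝ | ∃ l : List (Fin n), (i :: l).Nodup ∧ y = pathWeight w (i :: l)} := by
  have hfin : {l : List (Fin n) | (i :: l).Nodup}.Finite := by
    apply (List.finite_length_le (Fin n) n).subset
    intro l hl
    have : l.Nodup := (List.nodup_cons.mp hl).2
    simpa using this.length_le_card
  have : {y : ℝ | ∃ l : List (Fin n), (i :: l).Nodup ∧ y = pathWeight w (i :: l)}
      = (fun l => pathWeight w (i :: l)) '' {l | (i :: l).Nodup} := by
    ext y; simp [eq_comm]
  rw [this]
  exact (hfin.image _).bddAbove

lemma bddAbove_eset {n m : ℕ} (v : Fin n → Fin m → ℝ)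
    (x : (Fin n → Finset (Fin m)) → ℝ) (i k : Fin n) :
    BddAbove {y : ℝ | ∃ S : Finset (Fin m), 0 < prBundle x i S ∧
      y = condVal v x i k S - bundleVal v i S} := by
  have : {y : ℝ | ∃ S : Finset (Fin m), 0 < prBundle x i S ∧
      y = condVal v x i k S - bundleVal v i S}
      = (fun S => condVal v x i k S - bundleVal v i S) '' {S | 0 < prBundle x i S} := by
    ext y; simp [eq_comm]
  rw [this]
  exact (Set.toFinite _).image _ |>.bddAbove

/-- if the interim envy graph of a lottery has no cycle of positive total
weight, then the lottery is iEF-able with A-payments; indeed, setting `p i` to the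
maximum total weight of a directed path starting at node `i` works. -/
theorem no_positive_cycle_implies_iEFable {n m : ℕ} (v : Fin n → Fin m → ℝ)
    (hv : ∀ i j, 0 ≤ v i j)
    (x : (Fin n → Finset (Fin m)) → ℝ)
    (hx0 : ∀ a, 0 ≤ x a) (hx1 : ∑ a, x a = 1)
    (hcyc : ∀ (i : Fin n) (l : List (Fin n)), (i :: l).Nodup → l ≠ [] →
      pathWeight (envyWeight v x) (i :: l ++ [i]) ≤ 0) :
    IEFpay v x (fun i =>
      sSup {y : ℝ | ∃ l : List (Fin n), (i :: l).Nodup ∧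
        y = pathWeight (envyWeight v x) (i :: l)}) := by
  intro i k hik S hS
  set w := envyWeight v x with hw
  set P : Fin n → Set ℝ := fun j =>
    {y : ℝ | ∃ l : List (Fin n), (j :: l).Nodup ∧ y = pathWeight w (j :: l)} with hP
  simp only []
  have h0 : ∀ j, (0:ℝ) ∈ P j := fun j => ⟨[], by simp, rfl⟩
  have hne : ∀ j, (P j).Nonempty := fun j => ⟨0, h0 j⟩
  have hbdd : ∀ j, BddAbove (P j) := fun j => bddAbove_pset w j
  -- condVal - bundleVal ≤ w i k
  have h1 : condVal v x i k S - bundleVal v i S ≤ w i k :=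
    le_csSup (bddAbove_eset v x i k) ⟨S, hS, rfl⟩
  -- w i k + sSup (P k) ≤ sSup (P i)
  have key : ∀ y ∈ P k, w i k + y ≤ sSup (P i) := by
    rintro y ⟨l, hnd, rfl⟩
    by_cases hi : i ∈ k :: l
    · obtain ⟨pre, suf, hsplit⟩ := List.append_of_mem hi
      rcases pre with _ | ⟨k', pre'⟩
      · exact absurd (List.cons_eq_cons.mp hsplit).1.symm hik
      · obtain ⟨hk, hl⟩ := List.cons_eq_cons.mp hsplit
        subst hk
        subst hl
        have hnd' : (k :: pre' ++ i :: suf).Nodup := hsplit ▸ hnd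
        have hnd1 : (k :: pre').Nodup := hnd'.of_append_left
        have hnd2 : (i :: suf).Nodup := hnd'.of_append_right
        have hdisj : (k :: pre').Disjoint (i :: suf) :=
          List.disjoint_of_nodup_append hnd'
        have hni : i ∉ k :: pre' := fun h => hdisj h List.mem_cons_self
        have hcyc' := hcyc i (k :: pre') (List.nodup_cons.mpr ⟨hni, hnd1⟩) (by simp)
        have hcw : pathWeight w (i :: (k :: pre') ++ [i])
            = w i k + pathWeight w (k :: pre' ++ [i]) := by
          simp only [List.cons_append, List.append_eq, pathWeight]
        have hsplitw : pathWeight w ((k :: pre') ++ i :: suf)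
            = pathWeight w (k :: pre' ++ [i]) + pathWeight w (i :: suf) :=
          pathWeight_append w (k :: pre') i suf
        have hsub : pathWeight w (i :: suf) ≤ sSup (P i) :=
          le_csSup (hbdd i) ⟨suf, hnd2, rfl⟩
        rw [hcw] at hcyc'
        simp only [List.cons_append, List.append_eq] at hsplitw hcyc' ⊢
        rw [hsplitw]
        linarith
    · have hnd' : (i :: k :: l).Nodup := List.nodup_cons.mpr ⟨hi, hnd⟩
      have : pathWeight w (i :: k :: l) ∈ P i := ⟨k :: l, hnd', rfl⟩
      have hle : pathWeight w (i :: k :: l) ≤ sSup (P i) := le_csSup (hbdd i) this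
      simpa [pathWeight] using hle
  have h2 : w i k + sSup (P k) ≤ sSup (P i) := by
    have : sSup (P k) ≤ sSup (P i) - w i k :=
      csSup_le (hne k) (fun y hy => by linarith [key y hy])
    linarith
  show condVal v x i k S + sSup (P k) ≤ bundleVal v i S + sSup (P i)
  linarith
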